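/- Let q ≥ 2 and m ≥ 2 be integers such that m has at least two distinct prime divisors, and let s be a prime divisor of m. Assume that it is not the case that (2 divides m and q is odd), and not the case that (q = 2 and 6 divides m). Then (q^m - 1)/(q^{m/s} - 1) has at least two distinct prime divisors. -/

import Mathlib

open Polynomial Finset

private lemma pow_one_sub_dvd {q a b : ℕ} (h : a ∣ b) : q ^ a - 1 ∣ q ^ b - 1 := by
  obtain ⟨c, rfl⟩ := h
  rw [pow_mul]
  simpa using Nat.sub_dvd_pow_sub_pow (q ^ a) 1 c

private lemma prod_cyc_dvd {n : ℕ} (hn : 0 < n) (S : Finset ℕ) (hS : S ⊆ n.divisors) (q : ℤ) :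
    (∏ d ∈ S, (cyclotomic d ℤ).eval q) ∣ q ^ n - 1 := by
  have h2 : (∏ d ∈ S, cyclotomic d ℤ) ∣ X ^ n - 1 := by
    rw [← prod_cyclotomic_eq_X_pow_sub_one hn ℤ]
    exact Finset.prod_dvd_prod_of_subset S n.divisors _ hS
  simpa [eval_prod] using eval_dvd (x := q) h2

private lemma isRoot_mod {n p q : ℕ} [Fact p.Prime]
    (h : (p : ℤ) ∣ (cyclotomic n ℤ).eval (q : ℤ)) :
    IsRoot (cyclotomic n (ZMod p)) (q : ZMod p) := by
  have h0 : (((cyclotomic n ℤ).eval (q : ℤ) : ℤ) : ZMod p) = 0 :=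
    (ZMod.intCast_zmod_eq_zero_iff_dvd _ p).2 (by exact_mod_cast h)
  have h2 : (cyclotomic n (ZMod p)).eval (((q : ℤ) : ZMod p)) =
      (((cyclotomic n ℤ).eval (q : ℤ) : ℤ) : ZMod p) := by
    rw [← map_cyclotomic_int n (ZMod p), eval_intCast_map]
    rfl
  rw [IsRoot.def]
  have : ((q : ℤ) : ZMod p) = (q : ZMod p) := by push_cast; ring
  rw [← this, h2, h0]

private lemma dvd_iff_pow_eq_one {p q k : ℕ} (hq : 1 ≤ q) :
    p ∣ q ^ k - 1 ↔ (q : ZMod p) ^ k = 1 := by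
  rw [← ZMod.natCast_eq_zero_iff]
  have h1 : 1 ≤ q ^ k := Nat.one_le_pow _ _ hq
  rw [Nat.cast_sub h1]
  push_cast
  rw [sub_eq_zero, eq_comm]

private lemma primroot_of_dvd_cyc {n p q : ℕ} (hp : p.Prime)
    (hdvd : p ∣ ((cyclotomic n ℤ).eval (q : ℤ)).natAbs) (hpn : ¬ p ∣ n) :
    IsPrimitiveRoot (q : ZMod p) n := by
  haveI : Fact p.Prime := ⟨hp⟩
  haveI : NeZero ((n : ℕ) : ZMod p) :=
    ⟨by rw [Ne, ZMod.natCast_eq_zero_iff]; exact hpn⟩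
  have hint : (p : ℤ) ∣ (cyclotomic n ℤ).eval (q : ℤ) :=
    (Int.natCast_dvd_natCast.2 hdvd).trans (Int.natAbs_dvd.2 dvd_rfl)
  exact isRoot_cyclotomic_iff.1 (isRoot_mod hint)

private lemma primroot_of_dvd_cyc' {n p q : ℕ} (hn : n ≠ 0) (hp : p.Prime)
    (hdvd : p ∣ ((cyclotomic n ℤ).eval (q : ℤ)).natAbs) (hpn : p ∣ n) :
    IsPrimitiveRoot (q : ZMod p) (n / p ^ n.factorization p) := by
  haveI : Fact p.Prime := ⟨hp⟩
  have hnd : ¬ p ∣ n / p ^ n.factorization p := Nat.not_dvd_ordCompl hp hn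
  haveI : NeZero ((n / p ^ n.factorization p : ℕ) : ZMod p) :=
    ⟨by rw [Ne, ZMod.natCast_eq_zero_iff]; exact hnd⟩
  have hint : (p : ℤ) ∣ (cyclotomic n ℤ).eval (q : ℤ) :=
    (Int.natCast_dvd_natCast.2 hdvd).trans (Int.natAbs_dvd.2 dvd_rfl)
  have hroot := isRoot_mod (n := n) hint
  rw [← Nat.ordProj_mul_ordCompl_eq_self n p] at hroot
  exact (isRoot_cyclotomic_prime_pow_mul_iff_of_charP).1 hroot

private lemma geom_sum_not_sq_dvd {p a : ℕ} (hp : p.Prime) (hodd : p ≠ 2) (ha : 1 ≤ a)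
    (hdvd : p ∣ a - 1) : ¬ (p ^ 2 ∣ ∑ i ∈ Finset.range p, a ^ i) := by
  intro hcon
  have hcast : ((∑ i ∈ Finset.range p, a ^ i : ℕ) : ZMod (p ^ 2)) = 0 :=
    (ZMod.natCast_eq_zero_iff _ _).2 hcon
  push_cast at hcast
  obtain ⟨b, hb⟩ := hdvd
  set P : ZMod (p ^ 2) := (p : ZMod (p ^ 2)) with hP
  set B : ZMod (p ^ 2) := (b : ZMod (p ^ 2)) with hB
  have hab : (a : ZMod (p ^ 2)) = 1 + P * B := by
    have h' : a = 1 + p * b := by omega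
    rw [h']; push_cast; ring
  have hp2 : P * P = 0 := by
    have h0 : (((p ^ 2 : ℕ)) : ZMod (p ^ 2)) = 0 := ZMod.natCast_self _
    push_cast at h0
    rw [hP, ← h0]; ring
  have hpow : ∀ i : ℕ, (a : ZMod (p ^ 2)) ^ i = 1 + (i : ZMod (p ^ 2)) * (P * B) := by
    intro i
    induction i with
    | zero => simp
    | succ n ih =>
      have h0 : (n : ZMod (p ^ 2)) * (P * B) * (P * B) = 0 := by
        calc (n : ZMod (p ^ 2)) * (P * B) * (P * B) = (P * P) * ((n : ZMod (p^2)) * B * B) := by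
              ring
          _ = 0 := by rw [hp2, zero_mul]
      calc (a : ZMod (p ^ 2)) ^ (n + 1)
          = (1 + (n : ZMod (p^2)) * (P * B)) * (1 + P * B) := by
            rw [pow_succ ((a : ZMod (p ^ 2))) n, ih, hab]
        _ = 1 + ((n : ZMod (p^2)) + 1) * (P * B) + (n : ZMod (p^2)) * (P * B) * (P * B) := by
            ring
        _ = 1 + ((n : ZMod (p^2)) + 1) * (P * B) := by rw [h0, add_zero]
        _ = 1 + ((n + 1 : ℕ) : ZMod (p ^ 2)) * (P * B) := by push_cast; ring
  have h2 : 2 ∣ p - 1 := by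
    obtain ⟨c, hc⟩ := hp.odd_of_ne_two hodd
    omega
  obtain ⟨c, hc⟩ := h2
  have hsid : (∑ i ∈ Finset.range p, i) = p * c := by
    have h3 := Finset.sum_range_id_mul_two p
    have h4 : p * (p - 1) = (p * c) * 2 := by rw [hc]; ring
    omega
  have hsum : (∑ i ∈ Finset.range p, (a : ZMod (p ^ 2)) ^ i) = P := by
    calc (∑ i ∈ Finset.range p, (a : ZMod (p ^ 2)) ^ i)
        = ∑ i ∈ Finset.range p, (1 + (i : ZMod (p ^ 2)) * (P * B)) :=
          Finset.sum_congr rfl (fun i _ => hpow i)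
      _ = (p : ZMod (p ^ 2)) + (((∑ i ∈ Finset.range p, i : ℕ)) : ZMod (p ^ 2)) * (P * B) := by
          rw [Finset.sum_add_distrib, ← Finset.sum_mul]
          push_cast
          simp
      _ = P + ((p * c : ℕ) : ZMod (p ^ 2)) * (P * B) := by rw [hsid, hP]
      _ = P + (P * P) * ((c : ZMod (p ^ 2)) * B) := by push_cast; ring
      _ = P := by rw [hp2, zero_mul, add_zero]
  rw [hsum] at hcast
  have hlt : (p : ℕ) < p ^ 2 := by nlinarith [hp.two_le]
  have hne : P ≠ 0 := by
    rw [hP, Ne, ZMod.natCast_eq_zero_iff]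
    intro h
    exact absurd (Nat.le_of_dvd hp.pos h) (by omega)
  exact hne hcast

private lemma arith_A : ∀ p : ℕ, 5 ≤ p → 3 * p + 1 ≤ 2 ^ p := by
  intro p hp
  induction p with
  | zero => omega
  | succ n ih =>
    rcases Nat.lt_or_ge n 5 with h | h
    · interval_cases n <;> first | omega | norm_num
    · have := ih (by omega)
      have h2 : 2 ^ (n + 1) = 2 * 2 ^ n := by ring
      omega

private lemma arith_B : ∀ p : ℕ, 2 ≤ p → p + 2 ≤ 2 ^ p := by
  intro p hp
  induction p with
  | zero => omega
  | succ n ih =>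
    rcases Nat.lt_or_ge n 2 with h | h
    · interval_cases n <;> first | omega | norm_num
    · have := ih (by omega)
      have h2 : 2 ^ (n + 1) = 2 * 2 ^ n := by ring
      omega

private lemma pow_pred_ge {p : ℕ} (hp : 1 ≤ p) : p ≤ 2 ^ (p - 1) := by
  have := Nat.lt_two_pow_self (n := p - 1)
  omega

theorem quotient_has_two_prime_divisors (q m : ℕ) (hq : 2 ≤ q) (hm : 2 ≤ m)
    (hm2 : ∃ p₁ p₂ : ℕ, p₁.Prime ∧ p₂.Prime ∧ p₁ ≠ p₂ ∧ p₁ ∣ m ∧ p₂ ∣ m)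
    (s : ℕ) (hs : s.Prime) (hsm : s ∣ m)
    (h1 : ¬ (2 ∣ m ∧ Odd q)) (h2 : ¬ (q = 2 ∧ 6 ∣ m)) :
    ∃ p₁ p₂ : ℕ, p₁.Prime ∧ p₂.Prime ∧ p₁ ≠ p₂ ∧
      p₁ ∣ (q ^ m - 1) / (q ^ (m / s) - 1) ∧ p₂ ∣ (q ^ m - 1) / (q ^ (m / s) - 1) := by
  obtain ⟨A₁, A₂, hA₁, hA₂, hA12, hA1m, hA2m⟩ := hm2
  obtain ⟨r, hr, hrm, hrs⟩ : ∃ r, r.Prime ∧ r ∣ m ∧ r ≠ s := by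
    rcases eq_or_ne A₁ s with h | h
    · exact ⟨A₂, hA₂, hA2m, by rw [← h]; exact hA12.symm⟩
    · exact ⟨A₁, hA₁, hA1m, h⟩
  have hm0 : m ≠ 0 := by omega
  set t := m / s with ht
  have hst : s * t = m := Nat.mul_div_cancel' hsm
  have ht0 : t ≠ 0 := by intro h; rw [h, mul_zero] at hst; omega
  have hrt : r ∣ t := by
    have hco : Nat.Coprime r s := (Nat.coprime_primes hr hs).2 hrs
    exact hco.dvd_of_dvd_mul_left (by rw [hst]; exact hrm)
  have ht2 : 2 ≤ t := le_trans hr.two_le (Nat.le_of_dvd (Nat.pos_of_ne_zero ht0) hrt)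
  set mr := m / r with hmrdef
  have hmrr : mr * r = m := Nat.div_mul_cancel hrm
  have hsmr : s ∣ mr := by
    have hco : Nat.Coprime s r := (Nat.coprime_primes hs hr).2 (Ne.symm hrs)
    exact hco.dvd_of_dvd_mul_right (by rw [hmrr]; exact hsm)
  have hmr0 : mr ≠ 0 := by intro h; rw [h, zero_mul] at hmrr; omega
  have hmr2 : 2 ≤ mr := le_trans hs.two_le (Nat.le_of_dvd (Nat.pos_of_ne_zero hmr0) hsmr)
  have hmrlt : mr < m := by
    have := hr.two_le
    nlinarith [Nat.pos_of_ne_zero hmr0]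
  have htlt : t < m := by
    have := hs.two_le
    nlinarith [Nat.pos_of_ne_zero ht0]
  have hqm1 : 1 ≤ q ^ m := Nat.one_le_pow _ _ (by omega)
  have hqt1 : 2 ≤ q ^ t := by
    calc 2 = 2 ^ 1 := by norm_num
    _ ≤ q ^ t := Nat.pow_le_pow_left (by omega) 1 |>.trans (Nat.pow_le_pow_right (by omega) (by omega))
  set N := q ^ m - 1 with hN
  set D := q ^ t - 1 with hD
  have hDdvd : D ∣ N := pow_one_sub_dvd ⟨s, by rw [mul_comm]; exact hst.symm⟩
  set Q := N / D with hQdef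
  have hQ : Q * D = N := Nat.div_mul_cancel hDdvd
  set Φm := ((cyclotomic m ℤ).eval (q : ℤ)).natAbs with hΦm
  set Φmr := ((cyclotomic mr ℤ).eval (q : ℤ)).natAbs with hΦmr
  -- natAbs of q^k - 1
  have habs : ∀ k : ℕ, ((q : ℤ) ^ k - 1).natAbs = q ^ k - 1 := by
    intro k
    have h1' : 1 ≤ q ^ k := Nat.one_le_pow _ _ (by omega)
    have : ((q : ℤ) ^ k - 1) = ((q ^ k - 1 : ℕ) : ℤ) := by
      push_cast [Nat.cast_sub h1']
      ring
    rw [this, Int.natAbs_natCast]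
  -- key divisibility : Φm * Φmr ∣ Q
  have hmrnott : mr ∉ t.divisors := by
    intro hmem
    obtain ⟨c, hc⟩ := (Nat.mem_divisors.1 hmem).1
    have h1' : mr * r = mr * (s * c) := by
      rw [hmrr, ← hst, hc]; ring
    have h2' : r = s * c := Nat.eq_of_mul_eq_mul_left (Nat.pos_of_ne_zero hmr0) h1'
    have h3' : s ∣ r := ⟨c, h2'⟩
    exact hrs (((Nat.prime_dvd_prime_iff_eq hs hr).1 h3')).symm
  have hmnot : m ∉ insert mr t.divisors := by
    intro hmem
    rcases Finset.mem_insert.1 hmem with h | h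
    · omega
    · have := Nat.le_of_dvd (Nat.pos_of_ne_zero ht0) (Nat.mem_divisors.1 h).1
      omega
  have hsub : insert m (insert mr t.divisors) ⊆ m.divisors := by
    intro d hd
    rcases Finset.mem_insert.1 hd with rfl | hd
    · exact Nat.mem_divisors.2 ⟨dvd_rfl, hm0⟩
    rcases Finset.mem_insert.1 hd with rfl | hd
    · exact Nat.mem_divisors.2 ⟨⟨r, hmrr.symm⟩, hm0⟩
    · exact Nat.mem_divisors.2 ⟨(Nat.mem_divisors.1 hd).1.trans ⟨s, by rw [mul_comm]; exact hst.symm⟩, hm0⟩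
  have hprodt : (∏ d ∈ t.divisors, (cyclotomic d ℤ).eval (q : ℤ)) = (q : ℤ) ^ t - 1 := by
    rw [← eval_prod, prod_cyclotomic_eq_X_pow_sub_one (Nat.pos_of_ne_zero ht0) ℤ]
    simp
  have hZ : (((q : ℤ) ^ t - 1) * ((cyclotomic m ℤ).eval (q : ℤ) * (cyclotomic mr ℤ).eval (q : ℤ))) ∣ (q : ℤ) ^ m - 1 := by
    have hdvd := prod_cyc_dvd (Nat.pos_of_ne_zero hm0) _ hsub (q : ℤ)
    rw [Finset.prod_insert hmnot, Finset.prod_insert hmrnott, hprodt] at hdvd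
    have heq : ((cyclotomic m ℤ).eval (q:ℤ)) * ((cyclotomic mr ℤ).eval (q:ℤ) * ((q:ℤ)^t - 1))
        = ((q:ℤ)^t - 1) * ((cyclotomic m ℤ).eval (q:ℤ) * (cyclotomic mr ℤ).eval (q:ℤ)) := by ring
    rwa [heq] at hdvd
  have hnat : D * (Φm * Φmr) ∣ N := by
    have hdvd := Int.natAbs_dvd_natAbs.2 hZ
    rwa [Int.natAbs_mul, Int.natAbs_mul, habs t, habs m, ← hΦm, ← hΦmr, ← hD, ← hN] at hdvd
  have key : Φm * Φmr ∣ Q := (Nat.dvd_div_iff_mul_dvd hDdvd).2 hnat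
  have hΦm2 : 2 ≤ Φm := by
    have := sub_one_lt_natAbs_cyclotomic_eval (n := m) (q := q) (by omega) (by omega)
    omega
  have hΦmr2 : 2 ≤ Φmr := by
    have := sub_one_lt_natAbs_cyclotomic_eval (n := mr) (q := q) (by omega) (by omega)
    omega
  by_contra hcon
  push_neg at hcon
  set p := Φm.minFac with hpdef
  have hp : p.Prime := Nat.minFac_prime (by omega)
  have hpΦm : p ∣ Φm := Nat.minFac_dvd _
  have hΦmQ : Φm ∣ Q := (dvd_mul_right Φm Φmr).trans key
  have hΦmrQ : Φmr ∣ Q := (dvd_mul_left Φmr Φm).trans key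
  have hpQ : p ∣ Q := hpΦm.trans hΦmQ
  have huniq : ∀ l, l.Prime → l ∣ Q → l = p := by
    intro l hl hlQ
    by_contra hne
    exact hcon p l hp hl (fun h => hne h.symm) hpQ hlQ
  have hpΦmr : p ∣ Φmr := by
    have hp' : (Φmr.minFac).Prime := Nat.minFac_prime (by omega)
    have heq : Φmr.minFac = p := huniq _ hp' ((Nat.minFac_dvd _).trans hΦmrQ)
    rw [← heq]
    exact Nat.minFac_dvd _
  have hQN : Q ∣ N := ⟨D, hQ.symm⟩
  have hpN : p ∣ N := hpQ.trans hQN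
  have hpq : ¬ p ∣ q := by
    intro hdq
    have hA : p ∣ q ^ m := hdq.trans (dvd_pow_self q hm0)
    have hB : p ∣ q ^ m - N := Nat.dvd_sub hA hpN
    rw [show q ^ m - N = 1 by omega] at hB
    exact hp.one_lt.ne' (Nat.dvd_one.1 hB)
  by_cases hpm : p ∣ m
  · -- p divides m : the hard case
    have hp2 : p ≠ 2 := by
      intro hp2'
      rcases Nat.even_or_odd q with he | ho
      · exact hpq (by rw [hp2']; exact he.two_dvd)
      · exact h1 ⟨hp2' ▸ hpm, ho⟩
    have hp3 : 3 ≤ p := by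
      have := hp.two_le
      omega
    set k := m.factorization p with hkdef
    set n1 := m / p ^ k with hn1def
    have hsplit : p ^ k * n1 = m := Nat.ordProj_mul_ordCompl_eq_self m p
    have hpn1 : ¬ p ∣ n1 := Nat.not_dvd_ordCompl hp hm0
    have hk1 : 1 ≤ k := hp.factorization_pos_of_dvd hm0 hpm
    have PR := primroot_of_dvd_cyc' hm0 hp hpΦm hpm
    have hn12 : 2 ≤ n1 := by
      obtain ⟨w, hw, hwm, hwp⟩ : ∃ w, w.Prime ∧ w ∣ m ∧ w ≠ p := by
        rcases eq_or_ne A₁ p with h | h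
        · exact ⟨A₂, hA₂, hA2m, by rw [← h]; exact hA12.symm⟩
        · exact ⟨A₁, hA₁, hA1m, h⟩
      have hco : Nat.Coprime w (p ^ k) := ((Nat.coprime_primes hw hp).2 hwp).pow_right _
      have hwn1 : w ∣ n1 := hco.dvd_of_dvd_mul_left (by rw [hsplit]; exact hwm)
      have hn10 : n1 ≠ 0 := by intro h; rw [h, mul_zero] at hsplit; omega
      exact le_trans hw.two_le (Nat.le_of_dvd (Nat.pos_of_ne_zero hn10) hwn1)
    have hmp : m / p * p = m := Nat.div_mul_cancel hpm
    have hmpval : m / p = p ^ (k - 1) * n1 := by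
      have hkk : p ^ (k - 1) * p = p ^ k := by
        rw [← pow_succ]
        congr 1
        omega
      have h1' : (p ^ (k - 1) * n1) * p = m := by
        rw [mul_right_comm, hkk, hsplit]
      exact Nat.eq_of_mul_eq_mul_right hp.pos (hmp.trans h1'.symm)
    have hn1mp : n1 ∣ m / p := ⟨p ^ (k - 1), by rw [hmpval]; ring⟩
    have hmp1 : 1 ≤ m / p := Nat.one_le_div_iff hp.pos |>.2 (Nat.le_of_dvd (by omega) hpm)
    set a := q ^ (m / p) with hadef
    have ha2 : 2 ≤ a := by
      calc 2 = 2 ^ 1 := by norm_num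
      _ ≤ q ^ 1 := Nat.pow_le_pow_left (by omega) 1
      _ ≤ a := Nat.pow_le_pow_right (by omega) hmp1
    have hpdvda : p ∣ a - 1 := by
      rw [hadef, dvd_iff_pow_eq_one (by omega)]
      obtain ⟨c, hc⟩ := hn1mp
      rw [hc, pow_mul, PR.pow_eq_one, one_pow]
    set S := ∑ i ∈ Finset.range p, a ^ i with hSdef
    have hap : a ^ p = q ^ m := by rw [hadef, ← pow_mul, hmp]
    have hgeom : (a - 1) * S = N := by
      have h1' : ((a : ℤ) - 1) * (∑ i ∈ Finset.range p, (a : ℤ) ^ i) = (a : ℤ) ^ p - 1 := by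
        rw [mul_comm]
        exact geom_sum_mul _ _
      have hap1 : 1 ≤ a ^ p := Nat.one_le_pow _ _ (by omega)
      have h2' : (a - 1) * S = a ^ p - 1 := by
        have hcast : (((a - 1) * S : ℕ) : ℤ) = ((a ^ p - 1 : ℕ) : ℤ) := by
          push_cast [Nat.cast_sub (show 1 ≤ a by omega), Nat.cast_sub hap1, hSdef]
          rw [h1']
        exact_mod_cast hcast
      rw [h2', hap]
    have hΦmS : Φm ∣ S := by
      have hmnot2 : m ∉ (m / p).divisors := by
        intro hmem
        have := Nat.le_of_dvd (by omega) (Nat.mem_divisors.1 hmem).1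
        have : m / p < m := Nat.div_lt_self (by omega) hp.one_lt
        omega
      have hsub2 : insert m ((m / p).divisors) ⊆ m.divisors := by
        intro d hd
        rcases Finset.mem_insert.1 hd with rfl | hd
        · exact Nat.mem_divisors.2 ⟨dvd_rfl, hm0⟩
        · exact Nat.mem_divisors.2 ⟨(Nat.mem_divisors.1 hd).1.trans ⟨p, hmp.symm⟩, hm0⟩
      have hprodmp : (∏ d ∈ (m / p).divisors, (cyclotomic d ℤ).eval (q : ℤ)) = (q : ℤ) ^ (m / p) - 1 := by
        rw [← eval_prod, prod_cyclotomic_eq_X_pow_sub_one (by omega) ℤ]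
        simp
      have hZ2 : (((q : ℤ) ^ (m / p) - 1) * (cyclotomic m ℤ).eval (q : ℤ)) ∣ (q : ℤ) ^ m - 1 := by
        have hdvd := prod_cyc_dvd (Nat.pos_of_ne_zero hm0) _ hsub2 (q : ℤ)
        rw [Finset.prod_insert hmnot2, hprodmp, mul_comm] at hdvd
        exact hdvd
      have hnat2 : (a - 1) * Φm ∣ N := by
        have hdvd := Int.natAbs_dvd_natAbs.2 hZ2
        rwa [Int.natAbs_mul, habs (m / p), habs m, ← hΦm, ← hN, ← hadef] at hdvd
      rw [← hgeom] at hnat2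
      exact (Nat.mul_dvd_mul_iff_left (show 0 < a - 1 by omega)).1 hnat2
    have hS2 : ¬ p ^ 2 ∣ S := geom_sum_not_sq_dvd hp hp2 (by omega) hpdvda
    have hΦmeqp : Φm = p := by
      have hps := Nat.eq_prime_pow_of_unique_prime_dvd (show Φm ≠ 0 by omega)
        (fun {d} hd hdd => huniq d hd (hdd.trans hΦmQ))
      set j := Φm.primeFactorsList.length with hjdef
      have hj1 : j ≠ 0 := by
        intro h
        rw [h, pow_zero] at hps
        omega
      have hj2 : j < 2 := by
        by_contra hj
        push_neg at hj
        have : p ^ 2 ∣ Φm := by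
          rw [hps]
          exact pow_dvd_pow p hj
        exact hS2 (this.trans hΦmS)
      have hj : j = 1 := by omega
      rw [hps, hj, pow_one]
    clear hS2 hgeom hΦmS
    rcases eq_or_lt_of_le hq with hq2' | hq3
    · -- q = 2
      by_cases hk2 : 2 ≤ k
      · -- p^2 ∣ m : use Φ_m(q) = Φ_{m/p}(q^p)
        have hpmp : p ∣ m / p := by
          rw [hmpval]
          exact Dvd.dvd.mul_right (dvd_pow_self p (by omega : k - 1 ≠ 0)) _
        have hexp := cyclotomic_expand_eq_cyclotomic hp hpmp ℤ
        have heval : (cyclotomic m ℤ).eval (q : ℤ) = (cyclotomic (m / p) ℤ).eval (((q ^ p : ℕ)) : ℤ) := by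
          have h1'' : (cyclotomic m ℤ) = (expand ℤ p) (cyclotomic (m / p) ℤ) := by rw [hexp, hmp]
          rw [h1'', expand_eval]
          congr 1
        have hmp2 : 1 < m / p := by
          have hle1 : p ≤ p ^ (k - 1) := Nat.le_self_pow (by omega) p
          rw [hmpval]
          nlinarith
        have hqp2 : 2 ≤ q ^ p := by
          calc 2 = 2 ^ 1 := by norm_num
          _ ≤ q ^ 1 := Nat.pow_le_pow_left (by omega) 1
          _ ≤ q ^ p := Nat.pow_le_pow_right (by omega) hp.pos
        have hlow : (q ^ p - 1) ^ (m / p).totient < Φm := by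
          rw [hΦm, heval]
          exact sub_one_pow_totient_lt_natAbs_cyclotomic_eval hmp2 (by omega)
        have hle : q ^ p - 1 ≤ (q ^ p - 1) ^ (m / p).totient :=
          Nat.le_self_pow (Nat.totient_pos.2 (by omega)).ne' _
        have hqp : 2 ^ p ≤ q ^ p := Nat.pow_le_pow_left (by omega) p
        have harB := arith_B p hp.two_le
        omega
      · -- k = 1 : use Φ_{n1}(q^p) = Φ_m(q) * Φ_{n1}(q)
        have hk1' : k = 1 := by omega
        have hmpn : m = p * n1 := by rw [← hsplit, hk1', pow_one]
        haveI : Fact p.Prime := ⟨hp⟩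
        have hζ : (q : ZMod p) ≠ 0 := by
          rw [Ne, ZMod.natCast_eq_zero_iff]
          exact hpq
        have hn1p1 : n1 ∣ p - 1 := PR.dvd_of_pow_eq_one _ (ZMod.pow_card_sub_one_eq_one hζ)
        have hn1p : n1 ≤ p - 1 := Nat.le_of_dvd (by omega) hn1p1
        by_cases hp3' : p = 3
        · have hn1eq : n1 = 2 := by omega
          exact h2 ⟨hq2'.symm, by rw [hmpn, hp3', hn1eq]⟩
        · have hp5 : 5 ≤ p := by
            have h4 : p ≠ 4 := by intro h; rw [h] at hp; norm_num at hp
            omega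
          have hexp := cyclotomic_expand_eq_cyclotomic_mul hp hpn1 ℤ
          set B := ((cyclotomic n1 ℤ).eval (q : ℤ)).natAbs with hBdef
          have heval : ((cyclotomic n1 ℤ).eval (((q ^ p : ℕ)) : ℤ)).natAbs = Φm * B := by
            have h1'' : (cyclotomic n1 ℤ).eval ((q : ℤ) ^ p)
                = (cyclotomic (n1 * p) ℤ).eval (q : ℤ) * (cyclotomic n1 ℤ).eval (q : ℤ) := by
              rw [← expand_eval, hexp, eval_mul]
            have hcast : (((q ^ p : ℕ)) : ℤ) = (q : ℤ) ^ p := by push_cast; ring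
            have hn1pm : n1 * p = m := by rw [hmpn]; ring
            rw [hcast, h1'', hn1pm, Int.natAbs_mul, hΦm, hBdef]
          have hqp2 : 2 ≤ q ^ p := by
            calc 2 = 2 ^ 1 := by norm_num
            _ ≤ q ^ 1 := Nat.pow_le_pow_left (by omega) 1
            _ ≤ q ^ p := Nat.pow_le_pow_right (by omega) hp.pos
          have hlow : (q ^ p - 1) ^ n1.totient < Φm * B := by
            rw [← heval]
            exact sub_one_pow_totient_lt_natAbs_cyclotomic_eval (by omega) (by omega)
          have hqn12 : 2 ≤ q ^ n1 := by
            calc 2 = 2 ^ 1 := by norm_num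
            _ ≤ q ^ 1 := Nat.pow_le_pow_left (by omega) 1
            _ ≤ q ^ n1 := Nat.pow_le_pow_right (by omega) (by omega)
          have hBub : B ∣ q ^ n1 - 1 := by
            have hdvd : (cyclotomic n1 ℤ).eval (q : ℤ) ∣ (q : ℤ) ^ n1 - 1 := by
              have hsub3 : ({n1} : Finset ℕ) ⊆ n1.divisors :=
                Finset.singleton_subset_iff.2 (Nat.mem_divisors.2 ⟨dvd_rfl, by omega⟩)
              have := prod_cyc_dvd (show 0 < n1 by omega) _ hsub3 (q : ℤ)
              simpa using this
            have := Int.natAbs_dvd_natAbs.2 hdvd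
            rwa [habs n1] at this
          have hBub' : B ≤ q ^ n1 - 1 := Nat.le_of_dvd (by omega) hBub
          have hqp : q ^ p = 2 ^ p := by rw [← hq2']
          rcases eq_or_lt_of_le hn12 with hn1eq2 | hn1gt
          · -- n1 = 2
            have harA := arith_A p hp5
            have htot2 : n1.totient = 1 := by rw [← hn1eq2]; rfl
            rw [htot2, pow_one] at hlow
            have hqn1 : q ^ n1 = 4 := by rw [← hn1eq2, ← hq2']; norm_num
            have hmul : Φm * B ≤ p * 3 := by
              rw [hΦmeqp]
              exact Nat.mul_le_mul_left p (by omega)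
            omega
          · -- 3 ≤ n1
            have htotge : 2 ≤ n1.totient := by
              obtain ⟨c, hc⟩ := Nat.totient_even (by omega : 2 < n1)
              have hpos := Nat.totient_pos.2 (show 0 < n1 by omega)
              omega
            have hmono : (q ^ p - 1) ^ 2 ≤ (q ^ p - 1) ^ n1.totient :=
              Nat.pow_le_pow_right (by omega) htotge
            have h2n1 : q ^ n1 ≤ q ^ (p - 1) := Nat.pow_le_pow_right (by omega) hn1p
            have hpB : p ≤ q ^ p - 1 := by
              have := arith_B p hp.two_le
              omega
            have hq1p : q ^ (p - 1) ≤ q ^ p := Nat.pow_le_pow_right (by omega) (by omega)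
            have hfin : Φm * B ≤ (q ^ p - 1) * (q ^ p - 1) := by
              calc Φm * B ≤ (q ^ p - 1) * (q ^ n1 - 1) := Nat.mul_le_mul (by omega) (by omega)
              _ ≤ (q ^ p - 1) * (q ^ p - 1) := Nat.mul_le_mul_left _ (by omega)
            have hsq : (q ^ p - 1) * (q ^ p - 1) = (q ^ p - 1) ^ 2 := by ring
            omega
    · -- 3 ≤ q
      have hlow : (q - 1) ^ m.totient < Φm :=
        sub_one_pow_totient_lt_natAbs_cyclotomic_eval (by omega) (by omega)
      have htot : p - 1 ≤ m.totient := by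
        have hd : p.totient ∣ m.totient := Nat.totient_dvd_of_dvd hpm
        rw [Nat.totient_prime hp] at hd
        exact Nat.le_of_dvd (Nat.totient_pos.2 (Nat.pos_of_ne_zero hm0)) hd
      have h21 : 2 ^ (p - 1) ≤ (q - 1) ^ m.totient := by
        calc 2 ^ (p - 1) ≤ 2 ^ m.totient := Nat.pow_le_pow_right (by omega) htot
        _ ≤ (q - 1) ^ m.totient := Nat.pow_le_pow_left (by omega) _
      have h22 : p ≤ 2 ^ (p - 1) := pow_pred_ge (by omega)
      omega
  · -- p does not divide m : two primitive roots of distinct orders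
    have hpmr : ¬ p ∣ mr := fun h => hpm (h.trans ⟨r, hmrr.symm⟩)
    have PR1 := primroot_of_dvd_cyc hp hpΦm hpm
    have PR2 := primroot_of_dvd_cyc hp hpΦmr hpmr
    have : m = mr := PR1.unique PR2
    omega
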